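/- Let 𝔛 be a symmetric association scheme of class d ≥ 2. Then the following are equivalent: (1) 𝔛 is a Q-polynomial scheme with respect to E_1, i.e., Q-polynomial with respect to some ordering E_0, E_1, E_{i_2}, …, E_{i_d}; (2) the cardinality of N_d is equal to 1; (3) N_d is nonempty. -/

import Mathlib

open Matrix BigOperators Finset

/-- A symmetric association scheme of class `d` on a finite vertex set `V`,
bundled together with its adjacency matrices, primitive idempotents,
eigenmatrices `P`, `Q` and Krein parameters. -/
structure SymmAssocScheme (d : ℕ) (V : Type*) [Fintype V] [DecidableEq V] where
  /-- the relations `R_0, …, R_d` -/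
  R : Fin (d + 1) → Set (V × V)
  R_nonempty : ∀ i, (R i).Nonempty
  R_zero : R 0 = {p : V × V | p.1 = p.2}
  R_cover : ∀ p : V × V, ∃ i, p ∈ R i
  R_disjoint : ∀ i j, i ≠ j → R i ∩ R j = ∅
  R_symm : ∀ i, ∀ x y : V, (x, y) ∈ R i → (y, x) ∈ R i
  /-- the intersection numbers `p_{ij}^k` -/
  pnum : Fin (d + 1) → Fin (d + 1) → Fin (d + 1) → ℕ
  pnum_spec : ∀ i j k, ∀ x y : V, (x, y) ∈ R k →
    pnum i j k = {z : V | (x, z) ∈ R i ∧ (z, y) ∈ R j}.ncard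
  /-- the adjacency matrices `A_0, …, A_d` -/
  A : Fin (d + 1) → Matrix V V ℂ
  A_of_mem : ∀ i, ∀ x y : V, (x, y) ∈ R i → A i x y = 1
  A_of_not_mem : ∀ i, ∀ x y : V, (x, y) ∉ R i → A i x y = 0
  /-- the primitive idempotents `E_0, …, E_d` -/
  E : Fin (d + 1) → Matrix V V ℂ
  E_zero : E 0 = (Fintype.card V : ℂ)⁻¹ • Matrix.of (fun _ _ => (1 : ℂ))
  E_sum : ∑ i, E i = (1 : Matrix V V ℂ)
  E_mul : ∀ i j, E i * E j = if i = j then E i else 0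
  E_ne_zero : ∀ i, E i ≠ 0
  /-- the first eigenmatrix: `P i j = p_i(j)` -/
  P : Fin (d + 1) → Fin (d + 1) → ℝ
  /-- the second eigenmatrix: `Q i j = q_i(j)`; in particular `θ*_j = Q 1 j` -/
  Q : Fin (d + 1) → Fin (d + 1) → ℝ
  A_eq : ∀ i, A i = ∑ j, (P i j : ℂ) • E j
  E_eq : ∀ i, E i = (Fintype.card V : ℂ)⁻¹ • ∑ j, (Q i j : ℂ) • A j
  /-- the Krein parameters `q_{ij}^k` -/
  krein : Fin (d + 1) → Fin (d + 1) → Fin (d + 1) → ℝ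
  krein_spec : ∀ i j, Matrix.hadamard (E i) (E j) =
    (Fintype.card V : ℂ)⁻¹ • ∑ k, (krein i j k : ℂ) • E k
  krein_nonneg : ∀ i j k, 0 ≤ krein i j k

namespace SymmAssocScheme

variable {d : ℕ} {V : Type*} [Fintype V] [DecidableEq V]

/-- the `h`-fold Hadamard power `E_1^{∘h}` of `E_1`, with `E_1^{∘0} = J`
the all-ones matrix. -/
noncomputable def hadPowE1 (S : SymmAssocScheme d V) : ℕ → Matrix V V ℂ
  | 0 => Matrix.of fun _ _ => 1
  | n + 1 => Matrix.hadamard (hadPowE1 S n) (S.E 1)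

/-- `N h` is the set of indices `j` such that `E_j` is a component of `E_1^{∘h}`
(i.e. `E_j · E_1^{∘h} ≠ 0`) but not a component of `E_1^{∘l}` for any `l < h`. -/
def N (S : SymmAssocScheme d V) (h : ℕ) : Set (Fin (d + 1)) :=
  {j | S.E j * S.hadPowE1 h ≠ 0 ∧ ∀ l < h, S.E j * S.hadPowE1 l = 0}

/-- `𝔛` is `Q`-polynomial with respect to the ordering `E_{σ 0}, E_{σ 1}, …, E_{σ d}`:
for each `h` there is a polynomial `v*_h` of degree exactly `h` with
`q_{σ h}(j) = v*_h(q_1(j))` for all `j`. -/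
def IsQPolyOrdering (S : SymmAssocScheme d V) (σ : Equiv.Perm (Fin (d + 1))) : Prop :=
  ∀ h : Fin (d + 1), ∃ v : Polynomial ℝ, v.degree = (h : ℕ) ∧
    ∀ j, S.Q (σ h) j = v.eval (S.Q 1 j)

/-- `𝔛` is `Q`-polynomial with respect to `E_1`: it is `Q`-polynomial with respect
to some ordering of the form `E_0, E_1, E_{i_2}, …, E_{i_d}`. -/
def IsQPolyE1 (S : SymmAssocScheme d V) : Prop :=
  ∃ σ : Equiv.Perm (Fin (d + 1)), σ 0 = 0 ∧ σ 1 = 1 ∧ S.IsQPolyOrdering σ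

/-- `𝔛` is `P`-polynomial with respect to the ordering `A_{σ 0}, A_{σ 1}, …, A_{σ d}`. -/
def IsPPolyOrdering (S : SymmAssocScheme d V) (σ : Equiv.Perm (Fin (d + 1))) : Prop :=
  ∀ h : Fin (d + 1), ∃ v : Polynomial ℝ, v.degree = (h : ℕ) ∧
    ∀ j, S.P (σ h) j = v.eval (S.P 1 j)

/-- `𝔛` is `P`-polynomial with respect to `A_1`. -/
def IsPPolyA1 (S : SymmAssocScheme d V) : Prop :=
  ∃ σ : Equiv.Perm (Fin (d + 1)), σ 0 = 0 ∧ σ 1 = 1 ∧ S.IsPPolyOrdering σ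

/-- the ratio `K_i = ∏_{j=1, j≠i}^d (θ*_0 − θ*_j)/(θ*_i − θ*_j)`,
where `θ*_j = q_1(j)`. -/
noncomputable def K (S : SymmAssocScheme d V) (i : Fin (d + 1)) : ℝ :=
  ∏ j ∈ Finset.univ.filter (fun j => j ≠ 0 ∧ j ≠ i),
    (S.Q 1 0 - S.Q 1 j) / (S.Q 1 i - S.Q 1 j)

section Aux
open Polynomial

variable (S : SymmAssocScheme d V)

lemma card_pos (S : SymmAssocScheme d V) : 0 < Fintype.card V := by
  obtain ⟨p, -⟩ := S.R_nonempty 0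
  exact Fintype.card_pos_iff.mpr ⟨p.1⟩

lemma ncard_ne_zero (S : SymmAssocScheme d V) : ((Fintype.card V : ℝ)) ≠ 0 := by
  exact_mod_cast (S.card_pos).ne'

lemma ccard_ne_zero (S : SymmAssocScheme d V) : ((Fintype.card V : ℂ)) ≠ 0 := by
  exact_mod_cast (S.card_pos).ne'

lemma not_mem_of_mem {i j : Fin (d+1)} {x y : V} (h : (x,y) ∈ S.R i) (hij : j ≠ i) :
    (x,y) ∉ S.R j := by
  intro hj
  have := S.R_disjoint j i hij
  exact absurd (Set.mem_inter hj h) (by rw [this]; exact id)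

lemma sumA_apply (c : Fin (d+1) → ℂ) {i : Fin (d+1)} {x y : V} (h : (x,y) ∈ S.R i) :
    (∑ j, c j • S.A j) x y = c i := by
  rw [Matrix.sum_apply]
  rw [Finset.sum_eq_single i]
  · rw [Matrix.smul_apply, S.A_of_mem i x y h, smul_eq_mul, mul_one]
  · intro j _ hj
    rw [Matrix.smul_apply, S.A_of_not_mem j x y (S.not_mem_of_mem h hj), smul_eq_mul, mul_zero]
  · intro hi; exact absurd (Finset.mem_univ i) hi

lemma A_indep {c c' : Fin (d+1) → ℂ} (h : ∑ j, c j • S.A j = ∑ j, c' j • S.A j) : c = c' := by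
  funext i
  obtain ⟨⟨x, y⟩, hxy⟩ := S.R_nonempty i
  have := congrFun (congrFun h x) y
  rwa [show (∑ j, c j • S.A j) x y = c i from S.sumA_apply c hxy,
    show (∑ j, c' j • S.A j) x y = c' i from S.sumA_apply c' hxy] at this

lemma E_mul_sum (c : Fin (d+1) → ℂ) (i : Fin (d+1)) :
    S.E i * (∑ k, c k • S.E k) = c i • S.E i := by
  rw [Matrix.mul_sum]
  rw [Finset.sum_eq_single i]
  · rw [Matrix.mul_smul, S.E_mul i i, if_pos rfl]
  · intro j _ hj
    rw [Matrix.mul_smul, S.E_mul i j, if_neg (Ne.symm hj), smul_zero]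
  · intro hi; exact absurd (Finset.mem_univ i) hi

lemma E_indep {c : Fin (d+1) → ℂ} (h : ∑ k, c k • S.E k = 0) : c = 0 := by
  funext i
  have h2 := S.E_mul_sum c i
  rw [h, mul_zero] at h2
  rcases smul_eq_zero.mp h2.symm with h3 | h3
  · exact h3
  · exact absurd h3 (S.E_ne_zero i)

lemma E_indep' {c c' : Fin (d+1) → ℂ} (h : ∑ k, c k • S.E k = ∑ k, c' k • S.E k) : c = c' := by
  have : ∑ k, (c k - c' k) • S.E k = 0 := by
    simp only [sub_smul, Finset.sum_sub_distrib, h, sub_self]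
  have h2 := S.E_indep this
  funext i
  have := congrFun h2 i
  simpa [sub_eq_zero] using this

lemma sum_A_eq_J : ∑ j, S.A j = Matrix.of (fun _ _ => (1:ℂ)) := by
  ext x y
  obtain ⟨i, hi⟩ := S.R_cover (x, y)
  have : (∑ j, (1:ℂ) • S.A j) x y = (1:ℂ) := by rw [S.sumA_apply _ hi]
  simpa using this


/-- normalized dual eigenvalue -/
noncomputable def uA (S : SymmAssocScheme d V) (j : Fin (d+1)) : ℝ :=
  (Fintype.card V : ℝ)⁻¹ * S.Q 1 j

lemma E_A (i : Fin (d+1)) : S.E i = ∑ j, (((Fintype.card V : ℝ)⁻¹ * S.Q i j : ℝ) : ℂ) • S.A j := by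
  rw [S.E_eq i, Finset.smul_sum]
  apply Finset.sum_congr rfl
  intro j _
  rw [smul_smul]
  congr 1
  push_cast
  ring

lemma hadPow_A (h : ℕ) : S.hadPowE1 h = ∑ j, ((S.uA j ^ h : ℝ) : ℂ) • S.A j := by
  induction h with
  | zero =>
    simp only [hadPowE1, pow_zero, Complex.ofReal_one, one_smul]
    exact (S.sum_A_eq_J).symm
  | succ h ih =>
    show Matrix.hadamard (S.hadPowE1 h) (S.E 1) = _
    rw [ih, S.E_A 1]
    ext x y
    obtain ⟨i, hi⟩ := S.R_cover (x, y)
    rw [Matrix.hadamard_apply, S.sumA_apply _ hi, S.sumA_apply _ hi, S.sumA_apply _ hi]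
    rw [uA]
    push_cast
    ring

/-- coefficients of `E_1^{∘h}` in the basis of primitive idempotents -/
noncomputable def coeffc (S : SymmAssocScheme d V) : ℕ → Fin (d+1) → ℝ
  | 0 => fun k => if k = 0 then (Fintype.card V : ℝ) else 0
  | h + 1 => fun k => (Fintype.card V : ℝ)⁻¹ * ∑ j, S.coeffc h j * S.krein j 1 k

lemma coeffc_nonneg (h : ℕ) (k : Fin (d+1)) : 0 ≤ S.coeffc h k := by
  induction h generalizing k with
  | zero =>
    simp only [coeffc]
    split
    · positivity
    · exact le_refl 0
  | succ h ih =>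
    rw [coeffc]
    have : 0 ≤ ∑ j, S.coeffc h j * S.krein j 1 k :=
      Finset.sum_nonneg fun j _ => mul_nonneg (ih j) (S.krein_nonneg j 1 k)
    positivity

omit [Fintype V] [DecidableEq V] in
lemma hadamard_sum_left {m : Type*} [Fintype m] (f : m → Matrix V V ℂ) (M : Matrix V V ℂ) :
    Matrix.hadamard (∑ i, f i) M = ∑ i, Matrix.hadamard (f i) M := by
  ext x y
  simp [Matrix.hadamard_apply, Matrix.sum_apply, Finset.sum_mul]

lemma hadPow_E (h : ℕ) : S.hadPowE1 h = ∑ k, ((S.coeffc h k : ℝ) : ℂ) • S.E k := by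
  induction h with
  | zero =>
    show Matrix.of (fun _ _ => (1:ℂ)) = _
    rw [Finset.sum_eq_single (0 : Fin (d+1))]
    · have h0 : S.coeffc 0 0 = (Fintype.card V : ℝ) := by simp [coeffc]
      rw [h0, S.E_zero, smul_smul, Complex.ofReal_natCast,
        mul_inv_cancel₀ S.ccard_ne_zero, one_smul]
    · intro j _ hj
      simp only [coeffc, if_neg hj]
      simp
    · intro hi; exact absurd (Finset.mem_univ 0) hi
  | succ h ih =>
    show Matrix.hadamard (S.hadPowE1 h) (S.E 1) = _
    rw [ih, hadamard_sum_left]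
    have step : ∀ k, Matrix.hadamard ((S.coeffc h k : ℂ) • S.E k) (S.E 1)
        = ∑ m, ((Fintype.card V : ℂ)⁻¹ * (S.coeffc h k : ℂ) * (S.krein k 1 m : ℂ)) • S.E m := by
      intro k
      rw [Matrix.smul_hadamard, S.krein_spec k 1, Finset.smul_sum, Finset.smul_sum]
      apply Finset.sum_congr rfl
      intro m _
      rw [smul_smul, smul_smul]
      congr 1
      ring
    rw [Finset.sum_congr rfl (fun k _ => step k), Finset.sum_comm]
    apply Finset.sum_congr rfl
    intro m _
    rw [← Finset.sum_smul]
    congr 1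
    show _ = ((((Fintype.card V : ℝ)⁻¹ * ∑ j, S.coeffc h j * S.krein j 1 m : ℝ)) : ℂ)
    push_cast
    rw [Finset.mul_sum]
    apply Finset.sum_congr rfl
    intro k _
    ring

lemma E_comb_A (g : Fin (d+1) → ℝ) : ∑ k, ((g k : ℝ) : ℂ) • S.E k
    = ∑ j, ((((Fintype.card V : ℝ)⁻¹ * ∑ k, g k * S.Q k j : ℝ)) : ℂ) • S.A j := by
  have : ∀ k, ((g k : ℝ) : ℂ) • S.E k
      = ∑ j, ((g k * ((Fintype.card V : ℝ)⁻¹ * S.Q k j) : ℝ) : ℂ) • S.A j := by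
    intro k
    rw [S.E_A k, Finset.smul_sum]
    apply Finset.sum_congr rfl
    intro j _
    rw [smul_smul]
    norm_cast
  rw [Finset.sum_congr rfl (fun k _ => this k), Finset.sum_comm]
  apply Finset.sum_congr rfl
  intro j _
  rw [← Finset.sum_smul]
  congr 1
  push_cast
  rw [Finset.mul_sum]
  apply Finset.sum_congr rfl
  intro k _
  ring

lemma c_Q (h : ℕ) (j : Fin (d+1)) :
    ∑ k, S.coeffc h k * S.Q k j = (Fintype.card V : ℝ) * S.uA j ^ h := by
  have h1 : ∑ j, ((((Fintype.card V : ℝ)⁻¹ * ∑ k, S.coeffc h k * S.Q k j : ℝ)) : ℂ) • S.A j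
      = ∑ j, ((S.uA j ^ h : ℝ) : ℂ) • S.A j := by
    rw [← S.E_comb_A, ← S.hadPow_E, S.hadPow_A]
  have h2 := congrFun (S.A_indep h1) j
  have h3 : (Fintype.card V : ℝ)⁻¹ * ∑ k, S.coeffc h k * S.Q k j = S.uA j ^ h := by
    exact_mod_cast h2
  rw [← h3, ← mul_assoc, mul_inv_cancel₀ S.ncard_ne_zero, one_mul]

lemma QP (i k : Fin (d+1)) :
    ∑ j, S.Q i j * S.P j k = if i = k then (Fintype.card V : ℝ) else 0 := by
  have expand : S.E i = ∑ m, ((Fintype.card V : ℂ)⁻¹ * ∑ j, (S.Q i j : ℂ) * (S.P j m : ℂ)) • S.E m := by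
    conv_lhs => rw [S.E_eq i]
    have : ∀ j, ((S.Q i j : ℂ)) • S.A j = ∑ m, ((S.Q i j : ℂ) * (S.P j m : ℂ)) • S.E m := by
      intro j
      rw [S.A_eq j, Finset.smul_sum]
      exact Finset.sum_congr rfl fun m _ => smul_smul _ _ _
    rw [Finset.sum_congr rfl (fun j _ => this j), Finset.sum_comm, Finset.smul_sum]
    exact Finset.sum_congr rfl fun m _ => by rw [← Finset.sum_smul, smul_smul]
  have expand2 : S.E i = ∑ m, (if i = m then (1:ℂ) else 0) • S.E m := by
    rw [Finset.sum_congr rfl (fun m (_ : m ∈ Finset.univ) => by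
      rw [ite_smul, one_smul, zero_smul])]
    rw [Finset.sum_ite_eq (Finset.univ) i (fun m => S.E m), if_pos (Finset.mem_univ i)]
  have h4 := congrFun (S.E_indep' (expand.symm.trans expand2)) k
  have h5 : ((Fintype.card V : ℂ))⁻¹ * ((∑ j, S.Q i j * S.P j k : ℝ) : ℂ)
      = ((if i = k then (1:ℝ) else 0 : ℝ) : ℂ) := by
    push_cast
    rw [h4]
    split <;> norm_num
  have h6 : (Fintype.card V : ℝ)⁻¹ * (∑ j, S.Q i j * S.P j k) = (if i = k then (1:ℝ) else 0) :=
    Complex.ofReal_inj.mp (by push_cast; push_cast at h5; exact h5)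
  have hn := S.ncard_ne_zero
  split
  · rename_i hik
    rw [if_pos hik] at h6
    field_simp at h6
    linarith
  · rename_i hik
    rw [if_neg hik] at h6
    field_simp at h6
    simpa using h6

lemma w_unique {w : Fin (d+1) → ℝ} {g : Fin (d+1) → ℝ}
    (hw : ∀ j, ∑ k, w k * S.Q k j = g j) (k : Fin (d+1)) :
    w k = (Fintype.card V : ℝ)⁻¹ * ∑ j, g j * S.P j k := by
  have h1 : ∑ j, g j * S.P j k = ∑ j, ∑ k', w k' * S.Q k' j * S.P j k := by
    apply Finset.sum_congr rfl
    intro j _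
    rw [← hw j, Finset.sum_mul]
  rw [h1, Finset.sum_comm]
  have h2 : ∀ k', ∑ j, w k' * S.Q k' j * S.P j k = w k' * (if k' = k then (Fintype.card V : ℝ) else 0) := by
    intro k'
    rw [← S.QP k' k, Finset.mul_sum]
    exact Finset.sum_congr rfl fun j _ => by ring
  rw [Finset.sum_congr rfl (fun k' _ => h2 k')]
  rw [Finset.sum_eq_single k]
  · rw [if_pos rfl, mul_comm ((Fintype.card V : ℝ))⁻¹, mul_assoc, mul_inv_cancel₀ S.ncard_ne_zero, mul_one]
  · intro k' _ hk'; rw [if_neg hk', mul_zero]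
  · intro hk; exact absurd (Finset.mem_univ k) hk

lemma E_mul_hadPow (k : Fin (d+1)) (h : ℕ) :
    S.E k * S.hadPowE1 h = ((S.coeffc h k : ℝ) : ℂ) • S.E k := by
  rw [S.hadPow_E h, S.E_mul_sum]

lemma mem_N_iff (k : Fin (d+1)) (h : ℕ) :
    k ∈ S.N h ↔ (S.coeffc h k ≠ 0 ∧ ∀ l < h, S.coeffc l k = 0) := by
  have key : ∀ m, S.E k * S.hadPowE1 m = 0 ↔ S.coeffc m k = 0 := by
    intro m
    rw [S.E_mul_hadPow k m]
    constructor
    · intro hz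
      rcases smul_eq_zero.mp hz with h1 | h1
      · exact_mod_cast h1
      · exact absurd h1 (S.E_ne_zero k)
    · intro hz; rw [hz]; simp
  constructor
  · rintro ⟨h1, h2⟩
    exact ⟨fun hc => h1 ((key h).mpr hc), fun l hl => (key l).mp (h2 l hl)⟩
  · rintro ⟨h1, h2⟩
    exact ⟨fun hc => h1 ((key h).mp hc), fun l hl => (key l).mpr (h2 l hl)⟩

lemma coeffc_zero_eq (k : Fin (d+1)) :
    S.coeffc 0 k = if k = 0 then (Fintype.card V : ℝ) else 0 := by simp [coeffc]

lemma coeffc_one_eq (k : Fin (d+1)) :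
    S.coeffc 1 k = if k = 1 then 1 else 0 := by
  have h1 : S.hadPowE1 1 = S.E 1 := by
    show Matrix.hadamard (S.hadPowE1 0) (S.E 1) = S.E 1
    show Matrix.hadamard (Matrix.of fun _ _ => (1:ℂ)) (S.E 1) = S.E 1
    ext x y
    rw [Matrix.hadamard_apply]
    simp
  have h2 : ∑ m, ((S.coeffc 1 m : ℝ) : ℂ) • S.E m = ∑ m, (if m = 1 then (1:ℂ) else 0) • S.E m := by
    rw [← S.hadPow_E 1, h1]
    rw [Finset.sum_congr rfl (fun m (_ : m ∈ Finset.univ) => by rw [ite_smul, one_smul, zero_smul])]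
    rw [Finset.sum_ite_eq' Finset.univ (1 : Fin (d+1)) (fun m => S.E m), if_pos (Finset.mem_univ 1)]
  have h3 := congrFun (S.E_indep' h2) k
  split
  · rename_i hk; rw [hk, if_pos rfl] at h3; rw [hk]; exact_mod_cast h3
  · rename_i hk; rw [if_neg hk] at h3; exact_mod_cast h3

lemma coeffc_succ_ne {h : ℕ} {j k : Fin (d+1)} (h1 : S.coeffc h j ≠ 0) (h2 : S.krein j 1 k ≠ 0) :
    S.coeffc (h+1) k ≠ 0 := by
  have hpos : 0 < ∑ j', S.coeffc h j' * S.krein j' 1 k := by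
    apply Finset.sum_pos'
    · intro i _; exact mul_nonneg (S.coeffc_nonneg h i) (S.krein_nonneg i 1 k)
    · exact ⟨j, Finset.mem_univ j, mul_pos ((S.coeffc_nonneg h j).lt_of_ne (Ne.symm h1))
        ((S.krein_nonneg j 1 k).lt_of_ne (Ne.symm h2))⟩
  have : S.coeffc (h+1) k = (Fintype.card V : ℝ)⁻¹ * ∑ j', S.coeffc h j' * S.krein j' 1 k := by
    simp [coeffc]
  rw [this]
  have hn : (0:ℝ) < (Fintype.card V : ℝ)⁻¹ := by
    have := S.card_pos; positivity
  exact (mul_pos hn hpos).ne'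

lemma exists_of_coeffc_succ {h : ℕ} {k : Fin (d+1)} (hc : S.coeffc (h+1) k ≠ 0) :
    ∃ j, S.coeffc h j ≠ 0 ∧ S.krein j 1 k ≠ 0 := by
  by_contra hcon
  push_neg at hcon
  apply hc
  have : ∑ j', S.coeffc h j' * S.krein j' 1 k = 0 := by
    apply Finset.sum_eq_zero
    intro j _
    by_cases hj : S.coeffc h j = 0
    · rw [hj, zero_mul]
    · rw [hcon j hj, mul_zero]
  simp [coeffc, this]

lemma Q_zero_row (j : Fin (d+1)) : S.Q 0 j = 1 := by
  have h1 : S.E 0 = ∑ j, (((Fintype.card V : ℝ)⁻¹ * 1 : ℝ) : ℂ) • S.A j := by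
    rw [S.E_zero, ← S.sum_A_eq_J, Finset.smul_sum]
    apply Finset.sum_congr rfl
    intro j _
    congr 1
    push_cast
    ring
  have h2 := congrFun (S.A_indep ((S.E_A 0).symm.trans h1)) j
  have h3 : (Fintype.card V : ℝ)⁻¹ * S.Q 0 j = (Fintype.card V : ℝ)⁻¹ * 1 := by exact_mod_cast h2
  exact mul_left_cancel₀ (inv_ne_zero S.ncard_ne_zero) h3

open scoped Classical in
/-- indices `k` such that `E_k` is a component of some `E_1^{∘l}`, `l ≤ h` -/
noncomputable def Tset (S : SymmAssocScheme d V) (h : ℕ) : Finset (Fin (d+1)) :=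
  Finset.univ.filter (fun k => ∃ l ≤ h, S.coeffc l k ≠ 0)

lemma mem_Tset {k : Fin (d+1)} {h : ℕ} : k ∈ S.Tset h ↔ ∃ l ≤ h, S.coeffc l k ≠ 0 := by
  simp [Tset]

lemma Tset_mono {h h' : ℕ} (hh : h ≤ h') : S.Tset h ⊆ S.Tset h' := by
  intro k hk
  rw [S.mem_Tset] at hk ⊢
  obtain ⟨l, hl, hc⟩ := hk
  exact ⟨l, hl.trans hh, hc⟩

lemma Tset_zero : S.Tset 0 = {0} := by
  ext k
  rw [S.mem_Tset, Finset.mem_singleton]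
  constructor
  · rintro ⟨l, hl, hc⟩
    interval_cases l
    rw [S.coeffc_zero_eq] at hc
    by_contra hk
    rw [if_neg hk] at hc
    exact hc rfl
  · rintro rfl
    exact ⟨0, le_refl 0, by rw [S.coeffc_zero_eq, if_pos rfl]; exact S.ncard_ne_zero⟩

lemma Tset_one : S.Tset 1 = {0, 1} := by
  ext k
  rw [S.mem_Tset, Finset.mem_insert, Finset.mem_singleton]
  constructor
  · rintro ⟨l, hl, hc⟩
    interval_cases l
    · rw [S.coeffc_zero_eq] at hc
      by_contra hk
      push_neg at hk
      rw [if_neg hk.1] at hc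
      exact hc rfl
    · rw [S.coeffc_one_eq] at hc
      by_contra hk
      push_neg at hk
      rw [if_neg hk.2] at hc
      exact hc rfl
  · rintro (rfl | rfl)
    · exact ⟨0, Nat.zero_le 1, by rw [S.coeffc_zero_eq, if_pos rfl]; exact S.ncard_ne_zero⟩
    · exact ⟨1, le_refl 1, by rw [S.coeffc_one_eq, if_pos rfl]; exact one_ne_zero⟩

lemma Tset_stab {h : ℕ} (hs : S.Tset (h+1) ⊆ S.Tset h) : S.Tset (h+2) ⊆ S.Tset (h+1) := by
  intro k hk
  rw [S.mem_Tset] at hk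
  obtain ⟨l, hl, hc⟩ := hk
  rcases Nat.lt_or_ge l (h+2) with hl2 | hl2
  · exact S.mem_Tset.mpr ⟨l, by omega, hc⟩
  · have : l = h + 2 := by omega
    subst this
    obtain ⟨j, hj1, hj2⟩ := S.exists_of_coeffc_succ hc
    have hjT : j ∈ S.Tset h := hs (S.mem_Tset.mpr ⟨h+1, le_refl _, hj1⟩)
    obtain ⟨l', hl', hc'⟩ := S.mem_Tset.mp hjT
    exact S.mem_Tset.mpr ⟨l'+1, by omega, S.coeffc_succ_ne hc' hj2⟩

lemma Tset_stab' {h : ℕ} (hs : S.Tset (h+1) ⊆ S.Tset h) : ∀ m, S.Tset (h+m) ⊆ S.Tset h := by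
  have key : ∀ m, S.Tset (h+m+1) ⊆ S.Tset (h+m) := by
    intro m
    induction m with
    | zero => exact hs
    | succ m ih => exact S.Tset_stab ih
  intro m
  induction m with
  | zero => exact fun k hk => hk
  | succ m ih => exact fun k hk => ih (key m hk)

omit [Fintype V] [DecidableEq V] in
lemma poly_span (m : ℕ) (w : ℕ → Polynomial ℝ) (hw : ∀ l, l ≤ m → (w l).degree = l) :
    ∀ p : Polynomial ℝ, p.degree < (m+1 : ℕ) →
    ∃ μ : ℕ → ℝ, p = ∑ l ∈ Finset.range (m+1), Polynomial.C (μ l) * w l := by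
  induction m with
  | zero =>
    intro p hp
    have hw0 : (w 0).coeff 0 ≠ 0 := Polynomial.coeff_ne_zero_of_eq_degree (hw 0 le_rfl)
    have hp0 : p = Polynomial.C (p.coeff 0) := by
      apply Polynomial.eq_C_of_degree_le_zero
      have : p.degree < (1 : ℕ) := hp
      exact Order.lt_succ_iff.mp (by exact_mod_cast this)
    have hwC : w 0 = Polynomial.C ((w 0).coeff 0) := by
      apply Polynomial.eq_C_of_degree_le_zero
      rw [hw 0 le_rfl]
      norm_num
    obtain ⟨b, hb⟩ : ∃ b : ℝ, b = p.coeff 0 / (w 0).coeff 0 := ⟨_, rfl⟩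
    refine ⟨fun _ => b, ?_⟩
    rw [Finset.sum_range_one]
    conv_rhs => rw [hwC]
    rw [← Polynomial.C_mul, hb, div_mul_cancel₀ _ hw0, ← hp0]
  | succ m ih =>
    intro p hp
    have hcw : (w (m+1)).coeff (m+1) ≠ 0 :=
      Polynomial.coeff_ne_zero_of_eq_degree (hw (m+1) le_rfl)
    set a := p.coeff (m+1) / (w (m+1)).coeff (m+1) with ha
    set q := p - Polynomial.C a * w (m+1) with hq
    have hdegq : q.degree < ((m : ℕ)+1 : ℕ) := by
      rw [Polynomial.degree_lt_iff_coeff_zero]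
      intro m' hm'
      rw [hq, Polynomial.coeff_sub, Polynomial.coeff_C_mul]
      rcases eq_or_lt_of_le hm' with heq | hlt
      · subst heq
        rw [ha, div_mul_cancel₀ _ hcw, sub_self]
      · have h1 : p.coeff m' = 0 := Polynomial.coeff_eq_zero_of_degree_lt
          (lt_of_lt_of_le hp (by exact_mod_cast Nat.succ_le_of_lt hlt))
        have h2 : (w (m+1)).coeff m' = 0 := by
          apply Polynomial.coeff_eq_zero_of_degree_lt
          rw [hw (m+1) le_rfl]
          exact_mod_cast hlt
        rw [h1, h2, mul_zero, sub_self]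
    obtain ⟨μ', hμ'⟩ := ih (fun l hl => hw l (by omega)) q hdegq
    refine ⟨Function.update μ' (m+1) a, ?_⟩
    rw [Finset.sum_range_succ, Function.update_self]
    have : ∑ l ∈ Finset.range (m+1), Polynomial.C (Function.update μ' (m+1) a l) * w l
        = ∑ l ∈ Finset.range (m+1), Polynomial.C (μ' l) * w l := by
      apply Finset.sum_congr rfl
      intro l hl
      rw [Function.update_of_ne (by simp at hl; omega)]
    rw [this, ← hμ', hq]
    ring

omit [Fintype V] [DecidableEq V] in
lemma poly_span_coeff (m : ℕ) (w : ℕ → Polynomial ℝ) (hw : ∀ l, l ≤ m → (w l).degree = l)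
    (μ : ℕ → ℝ) :
    (∑ l ∈ Finset.range (m+1), Polynomial.C (μ l) * w l).coeff m = μ m * (w m).coeff m := by
  rw [Polynomial.finset_sum_coeff, Finset.sum_range_succ]
  have : ∑ l ∈ Finset.range m, (Polynomial.C (μ l) * w l).coeff m = 0 := by
    apply Finset.sum_eq_zero
    intro l hl
    rw [Polynomial.coeff_C_mul]
    have : (w l).coeff m = 0 := by
      apply Polynomial.coeff_eq_zero_of_degree_lt
      rw [hw l (by simp at hl; omega)]
      exact_mod_cast Finset.mem_range.mp hl
    rw [this, mul_zero]
  rw [this, zero_add, Polynomial.coeff_C_mul]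

lemma qpoly_N_singleton (σ : Equiv.Perm (Fin (d+1))) (hord : S.IsQPolyOrdering σ) :
    S.N d = {σ ⟨d, lt_add_one d⟩} := by
  classical
  choose v hv1 hv2 using hord
  set n : ℝ := (Fintype.card V : ℝ) with hn
  -- a ℕ-indexed version of the Fin family
  let F : ℕ → Fin (d+1) := fun l => if hl : l < d+1 then ⟨l, hl⟩ else 0
  have hF : ∀ l, l ≤ d → (F l : ℕ) = l := by
    intro l hl
    simp only [F, dif_pos (by omega : l < d+1)]
  let w : ℕ → Polynomial ℝ := fun l => if hl : l < d+1 then v ⟨l, hl⟩ else Polynomial.X ^ l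
  have hw : ∀ l, (w l).degree = l := by
    intro l
    by_cases hl : l < d+1
    · simp only [w, dif_pos hl]
      rw [hv1 ⟨l, hl⟩]
    · simp only [w, dif_neg hl]
      exact Polynomial.degree_X_pow l
  have hwv : ∀ l, l ≤ d → w l = v (F l) := by
    intro l hl
    simp only [w, F, dif_pos (by omega : l < d+1)]
  -- decompose X^h in the basis w
  have main : ∀ h : ℕ, h ≤ d → ∃ μ : ℕ → ℝ, μ h ≠ 0 ∧
      ∀ k, S.coeffc h k = n * (n⁻¹)^h * ∑ l ∈ Finset.range (h+1),
        (if σ (F l) = k then μ l else 0) := by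
    intro h hh
    obtain ⟨μ, hμ⟩ := poly_span h w (fun l _ => hw l) (Polynomial.X ^ h)
      (by rw [Polynomial.degree_X_pow]; exact_mod_cast lt_add_one h)
    have hμh : μ h ≠ 0 := by
      have hc := poly_span_coeff h w (fun l _ => hw l) μ
      rw [← hμ, Polynomial.coeff_X_pow, if_pos rfl] at hc
      intro h0
      rw [h0, zero_mul] at hc
      exact one_ne_zero hc
    refine ⟨μ, hμh, ?_⟩
    -- the candidate coefficient vector
    set cand : Fin (d+1) → ℝ := fun k => n * (n⁻¹)^h * ∑ l ∈ Finset.range (h+1),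
      (if σ (F l) = k then μ l else 0) with hcand
    have heval : ∀ j, (S.Q 1 j) ^ h = ∑ l ∈ Finset.range (h+1), μ l * S.Q (σ (F l)) j := by
      intro j
      have := congrArg (Polynomial.eval (S.Q 1 j)) hμ
      rw [Polynomial.eval_pow, Polynomial.eval_X, Polynomial.eval_finset_sum] at this
      rw [this]
      apply Finset.sum_congr rfl
      intro l hl
      have hld : l ≤ d := by have := Finset.mem_range.mp hl; omega
      rw [Polynomial.eval_mul, Polynomial.eval_C, hwv l hld, hv2 (F l) j]
    have hsat : ∀ j, ∑ k, cand k * S.Q k j = n * S.uA j ^ h := by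
      intro j
      have expand : ∀ k, cand k * S.Q k j = n * (n⁻¹)^h *
          ∑ l ∈ Finset.range (h+1), (if σ (F l) = k then μ l * S.Q k j else 0) := by
        intro k
        show (n * (n⁻¹)^h * ∑ l ∈ Finset.range (h+1), (if σ (F l) = k then μ l else 0)) * S.Q k j = _
        rw [mul_assoc]
        congr 1
        rw [Finset.sum_mul]
        apply Finset.sum_congr rfl
        intro l _
        rw [ite_mul, zero_mul]
      rw [Finset.sum_congr rfl (fun k _ => expand k), ← Finset.mul_sum, Finset.sum_comm]
      have inner : ∀ l, ∑ k, (if σ (F l) = k then μ l * S.Q k j else 0)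
          = μ l * S.Q (σ (F l)) j := by
        intro l
        rw [Finset.sum_ite_eq Finset.univ (σ (F l)) (fun k => μ l * S.Q k j),
          if_pos (Finset.mem_univ _)]
      rw [Finset.sum_congr rfl (fun l _ => inner l), ← heval j]
      rw [show S.uA j = n⁻¹ * S.Q 1 j from rfl]
      rw [mul_pow]
      ring
    intro k
    have h1 := S.w_unique (g := fun j => n * S.uA j ^ h) (fun j => S.c_Q h j) k
    have h2 := S.w_unique (g := fun j => n * S.uA j ^ h) hsat k
    rw [h1, ← h2]
  -- conclude
  have key_ne : ∀ h : ℕ, h ≤ d → S.coeffc h (σ (F h)) ≠ 0 := by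
    intro h hh
    obtain ⟨μ, hμh, hc⟩ := main h hh
    rw [hc (σ (F h))]
    have : ∑ l ∈ Finset.range (h+1), (if σ (F l) = σ (F h) then μ l else 0) = μ h := by
      rw [Finset.sum_eq_single h]
      · rw [if_pos rfl]
      · intro l hl hlh
        rw [if_neg]
        intro hEq
        have := σ.injective hEq
        have : (F l : ℕ) = (F h : ℕ) := by rw [this]
        rw [hF l (by have := Finset.mem_range.mp hl; omega), hF h hh] at this
        exact hlh this
      · intro hh'
        exact absurd (Finset.self_mem_range_succ h) hh'
    rw [this]
    have hnne : n ≠ 0 := S.ncard_ne_zero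
    positivity
  have key_zero : ∀ h m : ℕ, h ≤ d → m ≤ d → h < m → S.coeffc h (σ (F m)) = 0 := by
    intro h m hh hm hhm
    obtain ⟨μ, hμh, hc⟩ := main h hh
    rw [hc (σ (F m))]
    have : ∑ l ∈ Finset.range (h+1), (if σ (F l) = σ (F m) then μ l else 0) = 0 := by
      apply Finset.sum_eq_zero
      intro l hl
      rw [if_neg]
      intro hEq
      have := σ.injective hEq
      have h2 : (F l : ℕ) = (F m : ℕ) := by rw [this]
      rw [hF l (by have := Finset.mem_range.mp hl; omega), hF m hm] at h2
      have := Finset.mem_range.mp hl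
      omega
    rw [this, mul_zero]
  ext k
  rw [Set.mem_singleton_iff, S.mem_N_iff]
  constructor
  · rintro ⟨h1, h2⟩
    set m : Fin (d+1) := σ.symm k with hm
    have hk : σ m = k := σ.apply_symm_apply k
    have hmF : F (m : ℕ) = m := by
      apply Fin.ext
      rw [hF (m : ℕ) (by omega)]
    by_contra hne
    have hmd : (m : ℕ) < d := by
      rcases Nat.lt_or_ge (m : ℕ) d with h' | h'
      · exact h'
      · exfalso
        have : (m : ℕ) = d := by omega
        apply hne
        rw [← hk]
        congr 1
        apply Fin.ext
        show ((σ.symm k : Fin (d+1)) : ℕ) = d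
        rw [← hm]
        exact this
    have := key_ne (m : ℕ) (by omega)
    rw [hmF, hk] at this
    exact this (h2 (m : ℕ) hmd)
  · rintro rfl
    have hFd : F d = ⟨d, lt_add_one d⟩ := by
      apply Fin.ext
      rw [hF d le_rfl]
    constructor
    · have := key_ne d le_rfl
      rwa [hFd] at this
    · intro l hl
      have := key_zero l d (by omega) le_rfl hl
      rwa [hFd] at this

section Nd
variable {k0 : Fin (d+1)}

lemma Tset_strict (hd : 2 ≤ d) (hk1 : S.coeffc d k0 ≠ 0) (hk2 : ∀ l < d, S.coeffc l k0 = 0) :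
    ∀ h, h < d → ¬ (S.Tset (h+1) ⊆ S.Tset h) := by
  intro h hh hsub
  have hTd : S.Tset d ⊆ S.Tset h := by
    have := S.Tset_stab' hsub (d - h)
    have heq : h + (d - h) = d := by omega
    rwa [heq] at this
  have hk0d : k0 ∈ S.Tset d := S.mem_Tset.mpr ⟨d, le_rfl, hk1⟩
  have := hTd hk0d
  obtain ⟨l, hl, hc⟩ := S.mem_Tset.mp this
  exact hc (hk2 l (by omega))

lemma Tset_card_ge (hd : 2 ≤ d) (hk1 : S.coeffc d k0 ≠ 0) (hk2 : ∀ l < d, S.coeffc l k0 = 0) :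
    ∀ h, h ≤ d → h + 1 ≤ (S.Tset h).card := by
  intro h
  induction h with
  | zero => intro _; rw [S.Tset_zero]; simp
  | succ h ih =>
    intro hh
    have h1 := ih (by omega)
    have h2 : S.Tset h ⊂ S.Tset (h+1) := by
      constructor
      · exact S.Tset_mono (Nat.le_succ h)
      · exact S.Tset_strict hd hk1 hk2 h (by omega)
    have := Finset.card_lt_card h2
    omega

lemma Tset_card (hd : 2 ≤ d) (hk1 : S.coeffc d k0 ≠ 0) (hk2 : ∀ l < d, S.coeffc l k0 = 0) :
    ∀ h, h ≤ d → (S.Tset h).card = h + 1 := by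
  have haux : ∀ m, m ≤ d → (S.Tset (d - m)).card + m ≤ d + 1 := by
    intro m
    induction m with
    | zero =>
      intro _
      have : (S.Tset d).card ≤ (Finset.univ : Finset (Fin (d+1))).card := Finset.card_le_card
        (Finset.subset_univ _)
      simpa using this
    | succ m ih =>
      intro hm
      have h1 := ih (by omega)
      have h2 : S.Tset (d - (m+1)) ⊂ S.Tset (d - m) := by
        have he : d - (m+1) + 1 = d - m := by omega
        constructor
        · rw [← he]; exact S.Tset_mono (Nat.le_succ _)
        · rw [← he]; exact S.Tset_strict hd hk1 hk2 (d - (m+1)) (by omega)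
      have := Finset.card_lt_card h2
      omega
  intro h hh
  have h1 := S.Tset_card_ge hd hk1 hk2 h hh
  have h2 := haux (d - h) (by omega)
  have he : d - (d - h) = h := by omega
  rw [he] at h2
  omega

lemma N_eq_singleton (hd : 2 ≤ d) (hk1 : S.coeffc d k0 ≠ 0) (hk2 : ∀ l < d, S.coeffc l k0 = 0) :
    S.N d = {k0} := by
  classical
  have hcompl : (Finset.univ \ S.Tset (d-1)).card = 1 := by
    have h1 := S.Tset_card hd hk1 hk2 (d-1) (by omega)
    rw [Finset.card_sdiff_of_subset (Finset.subset_univ _)]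
    rw [h1]
    simp only [Finset.card_univ, Fintype.card_fin]
    omega
  have hk0compl : k0 ∈ Finset.univ \ S.Tset (d-1) := by
    rw [Finset.mem_sdiff]
    refine ⟨Finset.mem_univ _, ?_⟩
    intro hmem
    obtain ⟨l, hl, hc⟩ := S.mem_Tset.mp hmem
    exact hc (hk2 l (by omega))
  obtain ⟨a, ha⟩ := Finset.card_eq_one.mp hcompl
  rw [ha, Finset.mem_singleton] at hk0compl
  subst hk0compl
  ext k
  rw [Set.mem_singleton_iff, S.mem_N_iff]
  constructor
  · rintro ⟨hc1, hc2⟩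
    have : k ∈ Finset.univ \ S.Tset (d-1) := by
      rw [Finset.mem_sdiff]
      refine ⟨Finset.mem_univ _, ?_⟩
      intro hmem
      obtain ⟨l, hl, hc⟩ := S.mem_Tset.mp hmem
      exact hc (hc2 l (by omega))
    rw [ha, Finset.mem_singleton] at this
    exact this
  · rintro rfl
    exact ⟨hk1, hk2⟩

end Nd

lemma isQPolyE1_of_N {k0 : Fin (d+1)} (hd : 2 ≤ d)
    (hk1 : S.coeffc d k0 ≠ 0) (hk2 : ∀ l < d, S.coeffc l k0 = 0) : S.IsQPolyE1 := by
  classical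
  set n : ℝ := (Fintype.card V : ℝ) with hn
  have hnne : n ≠ 0 := S.ncard_ne_zero
  have hcard := S.Tset_card hd hk1 hk2
  have hstep : ∀ h, 1 ≤ h → h ≤ d → ∃ a, S.Tset h \ S.Tset (h-1) = {a} := by
    intro h h1 h2
    apply Finset.card_eq_one.mp
    rw [Finset.card_sdiff_of_subset (S.Tset_mono (by omega))]
    rw [hcard h h2, hcard (h-1) (by omega)]
    omega
  choose g hg using hstep
  obtain ⟨f, hf0, hfd⟩ : ∃ f : ℕ → Fin (d+1), f 0 = 0 ∧
      ∀ h, 1 ≤ h → h ≤ d → S.Tset h \ S.Tset (h-1) = {f h} := by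
    refine ⟨fun h => if hh : 1 ≤ h ∧ h ≤ d then g h hh.1 hh.2 else 0, by norm_num, ?_⟩
    intro h h1 h2
    simp only [dif_pos (⟨h1, h2⟩ : 1 ≤ h ∧ h ≤ d)]
    exact hg h h1 h2
  have hfmem : ∀ h, 1 ≤ h → h ≤ d → f h ∈ S.Tset h ∧ f h ∉ S.Tset (h-1) := by
    intro h h1 h2
    have : f h ∈ S.Tset h \ S.Tset (h-1) := by
      rw [hfd h h1 h2]; exact Finset.mem_singleton_self _
    exact Finset.mem_sdiff.mp this
  have hfT : ∀ h, h ≤ d → f h ∈ S.Tset h := by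
    intro h hh
    rcases Nat.eq_zero_or_pos h with h0 | h1
    · subst h0
      rw [hf0, S.Tset_zero]
      exact Finset.mem_singleton_self _
    · exact (hfmem h h1 hh).1
  have hTimage : ∀ h, h ≤ d → S.Tset h = Finset.image f (Finset.range (h+1)) := by
    intro h
    induction h with
    | zero =>
      intro _
      rw [S.Tset_zero, Finset.range_one, Finset.image_singleton, hf0]
    | succ h ih =>
      intro hh
      apply Finset.Subset.antisymm
      · intro k hk
        by_cases hkh : k ∈ S.Tset h
        · have h1 : k ∈ Finset.image f (Finset.range (h+1)) := by
            rw [← ih (by omega)]; exact hkh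
          exact Finset.image_subset_image (Finset.range_subset_range.mpr (by omega)) h1
        · have h2 : k ∈ S.Tset (h+1) \ S.Tset h := Finset.mem_sdiff.mpr ⟨hk, hkh⟩
          have h3 : (h+1) - 1 = h := by omega
          rw [show S.Tset h = S.Tset ((h+1)-1) by rw [h3]] at h2
          rw [hfd (h+1) (by omega) hh, Finset.mem_singleton] at h2
          subst h2
          exact Finset.mem_image.mpr ⟨h+1, Finset.self_mem_range_succ _, rfl⟩
      · intro k hk
        obtain ⟨l, hl, rfl⟩ := Finset.mem_image.mp hk
        have hl2 : l ≤ h+1 := by have := Finset.mem_range.mp hl; omega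
        exact S.Tset_mono hl2 (hfT l (by omega))
  have hval1 : ((1 : Fin (d+1)) : ℕ) = 1 := by
    rw [Fin.val_one']
    exact Nat.mod_eq_of_lt (by omega)
  have h01 : (0 : Fin (d+1)) ≠ 1 := by
    intro hc
    have := congrArg Fin.val hc
    rw [Fin.val_zero, hval1] at this
    omega
  have hf1 : f 1 = 1 := by
    have h1 := hfd 1 le_rfl (by omega)
    rw [show (1:ℕ) - 1 = 0 from rfl, S.Tset_one, S.Tset_zero] at h1
    have h2 : ({0, 1} : Finset (Fin (d+1))) \ {0} = {1} := by
      ext k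
      simp only [Finset.mem_sdiff, Finset.mem_insert, Finset.mem_singleton]
      constructor
      · rintro ⟨h3 | h3, h4⟩
        · exact absurd h3 h4
        · exact h3
      · rintro rfl
        exact ⟨Or.inr rfl, fun hc => h01 hc.symm⟩
    rw [h2] at h1
    exact (Finset.singleton_inj.mp h1).symm
  have finj : ∀ l m, l ≤ d → m ≤ d → f l = f m → l = m := by
    have haux : ∀ l m, l < m → m ≤ d → f l ≠ f m := by
      intro l m hlm hm heq2
      have ha : f l ∈ S.Tset (m-1) := S.Tset_mono (by omega) (hfT l (by omega))
      have hb : f m ∉ S.Tset (m-1) := (hfmem m (by omega) hm).2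
      rw [heq2] at ha
      exact hb ha
    intro l m hl hm heq
    rcases lt_trichotomy l m with hc | hc | hc
    · exact absurd heq (haux l m hc hm)
    · exact hc
    · exact absurd heq.symm (haux m l hc hl)
  have cdiag : ∀ h, h ≤ d → S.coeffc h (f h) ≠ 0 := by
    intro h hh
    rcases Nat.eq_zero_or_pos h with h0 | h1
    · subst h0
      rw [hf0, S.coeffc_zero_eq, if_pos rfl]
      exact hnne
    · obtain ⟨hm, hnot⟩ := hfmem h h1 hh
      obtain ⟨l, hl, hc⟩ := S.mem_Tset.mp hm
      have : l = h := by
        by_contra hne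
        exact hnot (S.mem_Tset.mpr ⟨l, by omega, hc⟩)
      subst this
      exact hc
  -- main polynomial construction
  have poly : ∀ h, h ≤ d → ∃ vv : ℕ → Polynomial ℝ, ∀ l, l ≤ h →
      (vv l).degree = (l : ℕ) ∧ ∀ j, S.Q (f l) j = (vv l).eval (S.Q 1 j) := by
    intro h
    induction h with
    | zero =>
      intro _
      refine ⟨fun _ => Polynomial.C 1, ?_⟩
      intro l hl
      interval_cases l
      constructor
      · rw [Polynomial.degree_C one_ne_zero]
        norm_num
      · intro j
        rw [hf0, S.Q_zero_row j, Polynomial.eval_C]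
    | succ h ih =>
      intro hh
      obtain ⟨vv, hvv⟩ := ih (by omega)
      have key : ∀ j, S.coeffc (h+1) (f (h+1)) * S.Q (f (h+1)) j
          = n * S.uA j ^ (h+1) - ∑ l ∈ Finset.range (h+1), S.coeffc (h+1) (f l) * S.Q (f l) j := by
        intro j
        have h1 : ∑ k ∈ S.Tset (h+1), S.coeffc (h+1) k * S.Q k j = n * S.uA j ^ (h+1) := by
          rw [← S.c_Q (h+1) j]
          apply Finset.sum_subset (Finset.subset_univ _)
          intro k _ hk
          have : S.coeffc (h+1) k = 0 := by
            by_contra hc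
            exact hk (S.mem_Tset.mpr ⟨h+1, le_rfl, hc⟩)
          rw [this, zero_mul]
        rw [hTimage (h+1) hh, Finset.sum_image (by
          intro a ha b hb hab
          exact finj a b (by have := Finset.mem_range.mp ha; omega)
            (by have := Finset.mem_range.mp hb; omega) hab)] at h1
        rw [Finset.sum_range_succ] at h1
        linarith [h1]
      have hbne : S.coeffc (h+1) (f (h+1)) ≠ 0 := cdiag (h+1) hh
      set b := S.coeffc (h+1) (f (h+1)) with hb
      set r : Polynomial ℝ :=
        ∑ l ∈ Finset.range (h+1), Polynomial.C (S.coeffc (h+1) (f l)) * vv l with hr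
      set vnew := Polynomial.C b⁻¹ * (Polynomial.C (n * (n⁻¹)^(h+1)) * Polynomial.X^(h+1) - r)
        with hv
      have hdegr : r.degree < ((h+1 : ℕ) : WithBot ℕ) := by
        rw [hr]
        apply lt_of_le_of_lt (Polynomial.degree_sum_le _ _)
        rw [Finset.sup_lt_iff (by exact_mod_cast WithBot.bot_lt_coe (h+1))]
        intro l hl
        apply lt_of_le_of_lt (Polynomial.degree_mul_le _ _)
        have hd2 : (vv l).degree = (l : ℕ) :=
          (hvv l (by have := Finset.mem_range.mp hl; omega)).1
        have h3 : (Polynomial.C (S.coeffc (h+1) (f l))).degree + (vv l).degree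
            ≤ 0 + ((l : ℕ) : WithBot ℕ) :=
          add_le_add Polynomial.degree_C_le (le_of_eq hd2)
        apply lt_of_le_of_lt h3
        rw [zero_add]
        exact_mod_cast Finset.mem_range.mp hl
      have hcne : n * (n⁻¹)^(h+1) ≠ 0 := by
        apply mul_ne_zero hnne
        exact pow_ne_zero _ (inv_ne_zero hnne)
      have hdeg1 : (Polynomial.C (n * (n⁻¹)^(h+1)) * Polynomial.X^(h+1) : Polynomial ℝ).degree
          = ((h+1 : ℕ) : WithBot ℕ) := Polynomial.degree_C_mul_X_pow _ hcne
      have hdegv : vnew.degree = ((h+1 : ℕ) : WithBot ℕ) := by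
        rw [hv, Polynomial.degree_C_mul (inv_ne_zero hbne),
          Polynomial.degree_sub_eq_left_of_degree_lt (by rw [hdeg1]; exact hdegr), hdeg1]
      have hevalv : ∀ j, S.Q (f (h+1)) j = vnew.eval (S.Q 1 j) := by
        intro j
        rw [hv]
        rw [Polynomial.eval_mul, Polynomial.eval_C, Polynomial.eval_sub, Polynomial.eval_mul,
          Polynomial.eval_C, Polynomial.eval_pow, Polynomial.eval_X, hr,
          Polynomial.eval_finset_sum]
        have hsum : ∑ l ∈ Finset.range (h+1), (Polynomial.C (S.coeffc (h+1) (f l)) * vv l).eval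
            (S.Q 1 j) = ∑ l ∈ Finset.range (h+1), S.coeffc (h+1) (f l) * S.Q (f l) j := by
          apply Finset.sum_congr rfl
          intro l hl
          rw [Polynomial.eval_mul, Polynomial.eval_C,
            ← (hvv l (by have := Finset.mem_range.mp hl; omega)).2 j]
        rw [hsum]
        have huA : n * (n⁻¹)^(h+1) * S.Q 1 j ^ (h+1) = n * S.uA j ^ (h+1) := by
          rw [show S.uA j = (Fintype.card V : ℝ)⁻¹ * S.Q 1 j from rfl, ← hn, mul_pow]
          ring
        rw [huA, ← key j, ← mul_assoc, inv_mul_cancel₀ hbne, one_mul]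
      refine ⟨Function.update vv (h+1) vnew, ?_⟩
      intro l hl
      rcases Nat.lt_or_ge l (h+1) with hl2 | hl2
      · rw [Function.update_of_ne (by omega)]
        exact hvv l (by omega)
      · have : l = h+1 := by omega
        subst this
        rw [Function.update_self]
        exact ⟨hdegv, hevalv⟩
  obtain ⟨vv, hvv⟩ := poly d le_rfl
  have hinj2 : Function.Injective (fun h : Fin (d+1) => f h.val) := by
    intro a b hab
    exact Fin.ext (finj a.val b.val a.is_le b.is_le hab)
  have hbij : Function.Bijective (fun h : Fin (d+1) => f h.val) :=
    (Finite.injective_iff_bijective).mp hinj2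
  refine ⟨Equiv.ofBijective _ hbij, ?_, ?_, ?_⟩
  · show f ((0 : Fin (d+1)) : ℕ) = 0
    rw [Fin.val_zero, hf0]
  · show f ((1 : Fin (d+1)) : ℕ) = 1
    rw [hval1, hf1]
  · intro h
    obtain ⟨hdeg, heval⟩ := hvv h.val h.is_le
    exact ⟨vv h.val, hdeg, fun j => heval j⟩
end Aux
end SymmAssocScheme

/-- Lemma 2. For a symmetric association scheme of class `d ≥ 2`,
the following are equivalent: (1) `𝔛` is `Q`-polynomial with respect to `E_1`;
(2) `|N_d| = 1`; (3) `N_d` is nonempty. -/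
theorem statement4 {d : ℕ} {V : Type*} [Fintype V] [DecidableEq V]
    (S : SymmAssocScheme d V) (hd : 2 ≤ d) :
    (S.IsQPolyE1 ↔ (S.N d).ncard = 1) ∧ ((S.N d).ncard = 1 ↔ (S.N d).Nonempty) := by
  classical
  have h31 : (S.N d).Nonempty → S.IsQPolyE1 := by
    rintro ⟨k0, hk0⟩
    rw [S.mem_N_iff] at hk0
    exact S.isQPolyE1_of_N hd hk0.1 hk0.2
  have h32 : (S.N d).Nonempty → (S.N d).ncard = 1 := by
    rintro ⟨k0, hk0⟩
    rw [S.mem_N_iff] at hk0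
    rw [S.N_eq_singleton hd hk0.1 hk0.2]
    exact Set.ncard_singleton k0
  have h12 : S.IsQPolyE1 → (S.N d).ncard = 1 := by
    rintro ⟨σ, h0, h1, hord⟩
    rw [S.qpoly_N_singleton σ hord]
    exact Set.ncard_singleton _
  have h23 : (S.N d).ncard = 1 → (S.N d).Nonempty := by
    intro h
    exact Set.nonempty_of_ncard_ne_zero (by omega)
  exact ⟨⟨h12, fun h => h31 (h23 h)⟩, ⟨h23, h32⟩⟩
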